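/- Let 1 < ρ < ∞ and let ω be a weight on ℝ^n such that ω^{−1/(ρ−1)} is locally integrable and for some constant C₀ and every ball B, (|B|^{−1}∫_B ω)·(|B|^{−1}∫_B ω^{−1/(ρ−1)})^{ρ−1} ≤ C₀. Then log ω is locally integrable and for every ball B, ∫_B ω ≤ C₀ |B| · exp(|B|^{−1}∫_B log ω) (the reverse Jensen inequality). -/

import Mathlib

open MeasureTheory Metric ENNReal

noncomputable section

/-- Euclidean space `ℝ^n`. -/
abbrev Rn (n : ℕ) : Type := EuclideanSpace ℝ (Fin n)

/-- A weight on `ℝ^n`: a measurable, everywhere positive, locally integrable function. -/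
def IsWeight {n : ℕ} (w : Rn n → ℝ) : Prop :=
  Measurable w ∧ (∀ x, 0 < w x) ∧ LocallyIntegrable w volume

/-- The weighted measure `w(E) = ∫_E w` of a set `E`, as an extended nonnegative real. -/
def wtMass {n : ℕ} (w : Rn n → ℝ) (E : Set (Rn n)) : ℝ≥0∞ :=
  ∫⁻ x in E, ENNReal.ofReal (w x)

/-- The weighted `L^p` norm of `f` restricted to a set `E`:
`(∫_E |f|^p w)^(1/p)`. -/
def wtLpOn {n : ℕ} (p : ℝ) (w : Rn n → ℝ) (E : Set (Rn n)) (f : Rn n → ℝ) : ℝ≥0∞ :=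
  (∫⁻ x in E, ENNReal.ofReal |f x| ^ p * ENNReal.ofReal (w x)) ^ (1 / p)

/-- The weighted `L^p` norm `‖f‖_{L^p(w)}` on all of `ℝ^n`. -/
def wtLp {n : ℕ} (p : ℝ) (w : Rn n → ℝ) (f : Rn n → ℝ) : ℝ≥0∞ :=
  wtLpOn p w Set.univ f

/-- The weighted weak `L^p` quasinorm of `f` restricted to a set `E`:
`sup_{t>0} t · w({x ∈ E : |f x| > t})^(1/p)`. -/
def wtWLpOn {n : ℕ} (p : ℝ) (w : Rn n → ℝ) (E : Set (Rn n)) (f : Rn n → ℝ) : ℝ≥0∞ :=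
  ⨆ (t : ℝ) (_ : 0 < t), ENNReal.ofReal t * wtMass w {x ∈ E | t < |f x|} ^ (1 / p)

/-- The weighted weak `L^p` quasinorm `‖f‖_{WL^p(w)}` on all of `ℝ^n`. -/
def wtWLp {n : ℕ} (p : ℝ) (w : Rn n → ℝ) (f : Rn n → ℝ) : ℝ≥0∞ :=
  wtWLpOn p w Set.univ f

/-- The weighted amalgam norm `‖f‖_{(L^p,L^q)^α(w;μ)}`. -/
def amalgamNorm {n : ℕ} (p q α : ℝ) (w μ : Rn n → ℝ) (f : Rn n → ℝ) : ℝ≥0∞ :=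
  ⨆ (r : ℝ) (_ : 0 < r),
    (∫⁻ y, (wtMass w (ball y r) ^ (1/α - 1/p - 1/q) * wtLpOn p w (ball y r) f) ^ q *
      ENNReal.ofReal (μ y)) ^ (1/q)

/-- The weighted weak amalgam norm `‖f‖_{(WL^p,L^q)^α(w;μ)}`. -/
def wAmalgamNorm {n : ℕ} (p q α : ℝ) (w μ : Rn n → ℝ) (f : Rn n → ℝ) : ℝ≥0∞ :=
  ⨆ (r : ℝ) (_ : 0 < r),
    (∫⁻ y, (wtMass w (ball y r) ^ (1/α - 1/p - 1/q) * wtWLpOn p w (ball y r) f) ^ q *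
      ENNReal.ofReal (μ y)) ^ (1/q)

/-- The product weight `ν_{w⃗} = ∏_k w_k^{p/p_k}`. -/
def nuW {n m : ℕ} (p : ℝ) (pk : Fin m → ℝ) (w : Fin m → Rn n → ℝ) : Rn n → ℝ :=
  fun x => ∏ k, w k x ^ (p / pk k)

/-- The `k`-th factor in the multilinear `A_{P⃗}` condition on a set `B`:
`(|B|⁻¹ ∫_B w^{-p'/p})^{1/p'}` when `p > 1` (note `p'/p = 1/(p-1)` and `1/p' = (p-1)/p`),
and `(essinf_B w)⁻¹` when `p = 1`. -/
def apFactor {n : ℕ} (pk : ℝ) (w : Rn n → ℝ) (B : Set (Rn n)) : ℝ≥0∞ :=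
  if pk = 1 then (essInf (fun x => ENNReal.ofReal (w x)) (volume.restrict B))⁻¹
  else ((volume B)⁻¹ * ∫⁻ x in B, ENNReal.ofReal (w x ^ (-(1 / (pk - 1))))) ^ ((pk - 1) / pk)

/-- The multilinear `A_{P⃗}` condition with constant `CW`. -/
def MultiAP {n m : ℕ} (p : ℝ) (pk : Fin m → ℝ) (w : Fin m → Rn n → ℝ) (CW : ℝ) : Prop :=
  ∀ (y : Rn n) (r : ℝ), 0 < r →
    ((volume (ball y r))⁻¹ * wtMass (nuW p pk w) (ball y r)) ^ (1/p) *
      (∏ k, apFactor (pk k) (w k) (ball y r)) ≤ ENNReal.ofReal CW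

/-- The `A_∞`-comparison condition with constants `Cc`, `δ`. -/
def AinfCompare {n : ℕ} (w : Rn n → ℝ) (Cc δ : ℝ) : Prop :=
  ∀ (y : Rn n) (r : ℝ), 0 < r → ∀ E : Set (Rn n), MeasurableSet E → E ⊆ ball y r →
    wtMass w E ≤ ENNReal.ofReal Cc * (volume E / volume (ball y r)) ^ δ * wtMass w (ball y r)

/-- Doubling condition with constant `Cd`. -/
def DoublingWt {n : ℕ} (w : Rn n → ℝ) (Cd : ℝ) : Prop :=
  ∀ (y : Rn n) (r : ℝ), 0 < r →
    wtMass w (ball y (2*r)) ≤ ENNReal.ofReal Cd * wtMass w (ball y r)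

/-- Reverse Jensen inequality with constant `CJ`. -/
def RevJensen {n : ℕ} (w : Rn n → ℝ) (CJ : ℝ) : Prop :=
  LocallyIntegrable (fun x => Real.log (w x)) volume ∧
  ∀ (y : Rn n) (r : ℝ), 0 < r →
    (∫ x in ball y r, w x) ≤
      CJ * (volume (ball y r)).toReal *
        Real.exp ((volume (ball y r)).toReal⁻¹ * ∫ x in ball y r, Real.log (w x))

/-- `T` is a.e. `m`-linear. -/
def AEMultilinear {n m : ℕ} (T : (Fin m → Rn n → ℝ) → Rn n → ℝ) : Prop :=
  ∀ g : Fin m → Rn n → ℝ, (∀ k, Measurable (g k)) →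
    ∀ (k : Fin m) (c : ℝ) (h : Rn n → ℝ), Measurable h →
      ∀ᵐ x ∂(volume : Measure (Rn n)),
        T (Function.update g k (fun y => c * g k y + h y)) x =
          c * T g x + T (Function.update g k h) x

/-- The complement of the essential support of `g`: the union of all open sets
on which `g` vanishes almost everywhere. -/
def essSuppCompl {n : ℕ} (g : Rn n → ℝ) : Set (Rn n) :=
  {x | ∃ U : Set (Rn n), IsOpen U ∧ x ∈ U ∧ ∀ᵐ y ∂(volume.restrict U), g y = 0}

/-- The multilinear size property with constant `A`: for a.e. `x` outside the essential
support of one of the entries, `|T(g⃗)(x)|` is dominated by the standard multilinear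
fractional kernel applied to `|g_k|`. -/
def SizeProp {n m : ℕ} (T : (Fin m → Rn n → ℝ) → Rn n → ℝ) (A : ℝ) : Prop :=
  ∀ g : Fin m → Rn n → ℝ, (∀ k, Measurable (g k)) → ∀ k₀ : Fin m,
    ∀ᵐ x ∂(volume.restrict (essSuppCompl (g k₀))),
      ENNReal.ofReal |T g x| ≤ ENNReal.ofReal A *
        ∫⁻ z : Fin m → Rn n,
          (∏ k, ENNReal.ofReal |g k (z k)|) /
            ENNReal.ofReal ((∑ k, dist x (z k)) ^ (m * n))

/-- `b_B`: the average of `b` over the ball `B(y,r)`. -/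
def ballAvg {n : ℕ} (b : Rn n → ℝ) (y : Rn n) (r : ℝ) : ℝ :=
  (volume (ball y r)).toReal⁻¹ * ∫ x in ball y r, b x

/-- The BMO seminorm of `b` is bounded by `M`. -/
def BMOBound {n : ℕ} (b : Rn n → ℝ) (M : ℝ) : Prop :=
  ∀ (y : Rn n) (r : ℝ), 0 < r →
    (volume (ball y r)).toReal⁻¹ * (∫ x in ball y r, |b x - ballAvg b y r|) ≤ M

/-- The commutator `[b,T]_k` in the `k`-th slot. -/
def commAt {n m : ℕ} (b : Rn n → ℝ) (k : Fin m)
    (T : (Fin m → Rn n → ℝ) → Rn n → ℝ) : (Fin m → Rn n → ℝ) → Rn n → ℝ :=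
  fun f x => b x * T f x - T (Function.update f k (fun y => b y * f k y)) x

/-- The multilinear commutator `[Σb⃗, T] = Σ_k [b_k,T]_k`. -/
def sumComm {n m : ℕ} (b : Fin m → Rn n → ℝ)
    (T : (Fin m → Rn n → ℝ) → Rn n → ℝ) : (Fin m → Rn n → ℝ) → Rn n → ℝ :=
  fun f x => ∑ k, commAt (b k) k T f x

/-- The iterated commutator `[Πb⃗, T] = [b_1,[b_2,…[b_{m-1},[b_m,T]_m]_{m-1}…]_2]_1`. -/
def iterComm {n m : ℕ} (b : Fin m → Rn n → ℝ)
    (T : (Fin m → Rn n → ℝ) → Rn n → ℝ) : (Fin m → Rn n → ℝ) → Rn n → ℝ :=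
  (List.finRange m).foldr (fun k S => commAt (b k) k S) T

/-- `Φ(t) = t(1 + log⁺ t)`. -/
def phiLL (t : ℝ) : ℝ := t * (1 + max (Real.log t) 0)

/-- The `L log L` Luxemburg norm of `f` over `B` with respect to the weight `w`:
`inf {σ > 0 : w(B)⁻¹ ∫_B Φ(|f|/σ) w ≤ 1}` (equal to `⊤` if no such `σ` exists). -/
def llogLOn {n : ℕ} (w : Rn n → ℝ) (B : Set (Rn n)) (f : Rn n → ℝ) : ℝ≥0∞ :=
  sInf {σ : ℝ≥0∞ | ∃ s : ℝ, 0 < s ∧ σ = ENNReal.ofReal s ∧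
    (wtMass w B)⁻¹ *
      (∫⁻ x in B, ENNReal.ofReal (phiLL (|f x| / s)) * ENNReal.ofReal (w x)) ≤ 1}

/-- The weighted amalgam norm of `L log L` type, `‖f‖_{(L log L, L^q)^α(w;μ)}`. -/
def llogLAmalgam {n : ℕ} (q α : ℝ) (w μ : Rn n → ℝ) (f : Rn n → ℝ) : ℝ≥0∞ :=
  ⨆ (r : ℝ) (_ : 0 < r),
    (∫⁻ y, (wtMass w (ball y r) ^ (1/α - 1/q) * llogLOn w (ball y r) f) ^ q *
      ENNReal.ofReal (μ y)) ^ (1/q)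

/-- Reverse Hölder inequality with exponent `s` and constant `CR`. -/
def RevHolder {n : ℕ} (w : Rn n → ℝ) (s CR : ℝ) : Prop :=
  ∀ (y : Rn n) (r : ℝ), 0 < r →
    ((volume (ball y r))⁻¹ * ∫⁻ x in ball y r, ENNReal.ofReal (w x ^ s)) ^ (1/s) ≤
      ENNReal.ofReal CR * ((volume (ball y r))⁻¹ * wtMass w (ball y r))

lemma abs_log_le (t ρ : ℝ) (ht : 0 < t) (hρ : 1 < ρ) :
    |Real.log t| ≤ t + (ρ-1) * t ^ (-(1/(ρ-1))) := by
  have h1 : Real.log t ≤ t := (Real.log_le_sub_one_of_pos ht).trans (by linarith)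
  have hc : (0:ℝ) < ρ - 1 := by linarith
  have h2 : -Real.log t ≤ (ρ-1) * t ^ (-(1/(ρ-1))) := by
    have := Real.log_le_sub_one_of_pos (Real.rpow_pos_of_pos ht (-(1/(ρ-1))))
    rw [Real.log_rpow ht] at this
    have h3 : -(1/(ρ-1)) * Real.log t ≤ t ^ (-(1/(ρ-1))) := by linarith
    calc -Real.log t = (ρ-1) * (-(1/(ρ-1)) * Real.log t) := by field_simp
      _ ≤ (ρ-1) * t ^ (-(1/(ρ-1))) := by nlinarith
  have hp : 0 ≤ t ^ (-(1/(ρ-1))) := (Real.rpow_pos_of_pos ht _).le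
  rcases abs_cases (Real.log t) with ⟨h,_⟩|⟨h,_⟩ <;> rw [h] <;> nlinarith

/-- an `A_ρ` weight satisfies the reverse Jensen inequality with the same
constant; in particular `log ω` is locally integrable. -/
theorem Ap_implies_reverse_Jensen
    {n : ℕ} (ρ : ℝ) (hρ : 1 < ρ) (ω : Rn n → ℝ) (hω : IsWeight ω)
    (hdual : LocallyIntegrable (fun x => ω x ^ (-(1/(ρ-1)))) volume)
    (C₀ : ℝ)
    (hA : ∀ (y : Rn n) (r : ℝ), 0 < r →
      ((volume (ball y r)).toReal⁻¹ * ∫ x in ball y r, ω x) *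
        ((volume (ball y r)).toReal⁻¹ * ∫ x in ball y r, ω x ^ (-(1/(ρ-1)))) ^ (ρ - 1)
        ≤ C₀) :
    LocallyIntegrable (fun x => Real.log (ω x)) volume ∧
    ∀ (y : Rn n) (r : ℝ), 0 < r →
      (∫ x in ball y r, ω x) ≤
        C₀ * (volume (ball y r)).toReal *
          Real.exp ((volume (ball y r)).toReal⁻¹ * ∫ x in ball y r, Real.log (ω x)) := by
  obtain ⟨hmeas, hpos, hloc⟩ := hω
  have hc : (0:ℝ) < ρ - 1 := by linarith
  have hlogloc : LocallyIntegrable (fun x => Real.log (ω x)) volume := by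
    have hsum : LocallyIntegrable
        (fun x => ω x + (ρ-1) * ω x ^ (-(1/(ρ-1)))) volume :=
      hloc.add (hdual.smul (ρ-1))
    refine hsum.mono (hmeas.log.aestronglyMeasurable) ?_
    filter_upwards with x
    have hb := abs_log_le (ω x) ρ (hpos x) hρ
    have hp : 0 ≤ ω x ^ (-(1/(ρ-1))) := (Real.rpow_pos_of_pos (hpos x) _).le
    have h0 : 0 < ω x := hpos x
    rw [Real.norm_eq_abs, Real.norm_eq_abs]
    exact hb.trans (le_abs_self _)
  refine ⟨hlogloc, fun y r hr => ?_⟩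
  set B := ball y r with hB
  have hB0 : 0 < volume B := measure_ball_pos _ _ hr
  have hBtop : volume B < ⊤ := measure_ball_lt_top
  set V := (volume B).toReal with hV
  have hVpos : 0 < V := ENNReal.toReal_pos hB0.ne' hBtop.ne
  set μ := volume.restrict B with hμ
  haveI : IsFiniteMeasure μ := ⟨by rw [hμ, Measure.restrict_apply_univ]; exact hBtop⟩
  haveI : NeZero μ := ⟨by rw [hμ, Ne, Measure.restrict_eq_zero]; exact hB0.ne'⟩
  have hωB : IntegrableOn ω B volume :=
    (hloc.integrableOn_isCompact (isCompact_closedBall y r)).mono_set ball_subset_closedBall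
  have hdualB : IntegrableOn (fun x => ω x ^ (-(1/(ρ-1)))) B volume :=
    (hdual.integrableOn_isCompact (isCompact_closedBall y r)).mono_set ball_subset_closedBall
  have hlogB : IntegrableOn (fun x => Real.log (ω x)) B volume :=
    (hlogloc.integrableOn_isCompact (isCompact_closedBall y r)).mono_set ball_subset_closedBall
  set f : Rn n → ℝ := fun x => (-(1/(ρ-1))) * Real.log (ω x) with hf
  have hfint : Integrable f μ := hlogB.const_mul _
  have hexpf : ∀ x, Real.exp (f x) = ω x ^ (-(1/(ρ-1))) := fun x => by
    rw [hf, Real.rpow_def_of_pos (hpos x), mul_comm]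
  have hefint : Integrable (fun x => Real.exp (f x)) μ := by
    simpa only [hexpf] using hdualB.integrable
  have hjen : Real.exp (⨍ x, f x ∂μ) ≤ ⨍ x, Real.exp (f x) ∂μ := by
    have := convexOn_exp.map_average_le Real.continuous_exp.continuousOn isClosed_univ
      (Filter.Eventually.of_forall fun x => Set.mem_univ _) hfint hefint
    exact this
  set L := V⁻¹ * ∫ x in B, Real.log (ω x) with hL
  set D := V⁻¹ * ∫ x in B, ω x ^ (-(1/(ρ-1))) with hD
  set W := V⁻¹ * ∫ x in B, ω x with hW
  have havg1 : (⨍ x, f x ∂μ) = (-(1/(ρ-1))) * L := by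
    rw [average_eq, hμ, measureReal_def, Measure.restrict_apply_univ, smul_eq_mul, hf]
    rw [integral_const_mul, hL, ← hV]; ring
  have havg2 : (⨍ x, Real.exp (f x) ∂μ) = D := by
    rw [average_eq, hμ, measureReal_def, Measure.restrict_apply_univ, smul_eq_mul, hD, ← hV]
    congr 1
    exact integral_congr_ae (Filter.Eventually.of_forall fun x => hexpf x)
  rw [havg1, havg2] at hjen
  have h4 : Real.exp (-L) ≤ D ^ (ρ-1) := by
    have h5 := Real.rpow_le_rpow (Real.exp_pos _).le hjen hc.le
    rw [← Real.exp_mul] at h5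
    have : (-(1/(ρ-1))) * L * (ρ-1) = -L := by field_simp
    rwa [this] at h5
  have hAyr := hA y r hr
  rw [← hB, ← hV, ← hW, ← hD] at hAyr
  have hWnn : 0 ≤ W := by
    rw [hW]
    have : 0 ≤ ∫ x in B, ω x :=
      setIntegral_nonneg measurableSet_ball fun x _ => (hpos x).le
    positivity
  have h6 : W * Real.exp (-L) ≤ C₀ := le_trans (by nlinarith) hAyr
  have h7 : W ≤ C₀ * Real.exp L := by
    have he : Real.exp (-L) * Real.exp L = 1 := by
      rw [← Real.exp_add]; simp
    nlinarith [Real.exp_pos L, Real.exp_pos (-L)]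
  have h8 : (∫ x in B, ω x) = V * W := by rw [hW]; field_simp
  have goal' : (∫ x in B, ω x) ≤ C₀ * V * Real.exp L := by
    rw [h8]; nlinarith [Real.exp_pos L]
  exact goal'
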